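/- For every integer L ≥ 2, the translation operator 𝒯 maps the physical subspace 𝒲 into itself: if w ∈ 𝒲 then 𝒯w ∈ 𝒲. -/

import Mathlib

open Matrix
open scoped Kronecker

noncomputable section

/-- π(σ): 3×3 matrix with rows (0,1,0),(0,0,1),(1,0,0). -/
def Smat : Matrix (Fin 3) (Fin 3) ℂ := !![0,1,0; 0,0,1; 1,0,0]

/-- π(τ): 3×3 matrix with rows (1,0,0),(0,0,1),(0,1,0). -/
def Tmat : Matrix (Fin 3) (Fin 3) ℂ := !![1,0,0; 0,0,1; 0,1,0]

/-- The representation π_{(3,+)} on group elements of D₃ = DihedralGroup 3,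
extended multiplicatively from π(σ) = Smat, π(τ) = Tmat.
Here `DihedralGroup.r i` = σ^i and `DihedralGroup.sr i` = τσ^i. -/
def pig : DihedralGroup 3 → Matrix (Fin 3) (Fin 3) ℂ
  | DihedralGroup.r i => Smat ^ i.val
  | DihedralGroup.sr i => Tmat * Smat ^ i.val

/-- The representation π_{(3,+)} on dual elements: π((σ^i)*) = 0 and
π((σ^i τ)*) = E^{i+1}_{i+1}.  Since σ^i τ = `DihedralGroup.sr (-i)`, the dual
of `sr j` acts as the matrix unit at position (-j).val. -/
def pidual : DihedralGroup 3 → Matrix (Fin 3) (Fin 3) ℂ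
  | DihedralGroup.r _ => 0
  | DihedralGroup.sr j =>
      Matrix.single ⟨(-j).val, ZMod.val_lt _⟩ ⟨(-j).val, ZMod.val_lt _⟩ 1

/-- The coproduct action Δ(g h*) on ℂ³⊗ℂ³. -/
def copr (g h : DihedralGroup 3) : Matrix (Fin 3 × Fin 3) (Fin 3 × Fin 3) ℂ :=
  ∑ k : DihedralGroup 3, (pig g * pidual (k⁻¹ * h)) ⊗ₖ (pig g * pidual k)

/-- The local two-site Hamiltonian 𝔥 = Σ_γ i(E^{γ(1)}_{γ(2)} ⊗ E^{γ(2)}_{γ(3)}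
− E^{γ(2)}_{γ(3)} ⊗ E^{γ(1)}_{γ(2)}), summed over permutations γ of {1,2,3}. -/
def hloc : Matrix (Fin 3 × Fin 3) (Fin 3 × Fin 3) ℂ :=
  ∑ γ : Equiv.Perm (Fin 3),
    Complex.I •
      ((Matrix.single (γ 0) (γ 1) (1 : ℂ)) ⊗ₖ (Matrix.single (γ 1) (γ 2) (1 : ℂ))
        - (Matrix.single (γ 1) (γ 2) (1 : ℂ)) ⊗ₖ (Matrix.single (γ 0) (γ 1) (1 : ℂ)))

/-- The L-fold coproduct action A(g,h) = Σ_{h_L⋯h₁ = h} ⊗_m π(g)π(h_m*)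
on (ℂ³)^{⊗L}. -/
def Afold (L : ℕ) (g h : DihedralGroup 3) :
    Matrix (Fin L → Fin 3) (Fin L → Fin 3) ℂ :=
  ∑ f : Fin L → DihedralGroup 3,
    if ((List.finRange L).reverse.map f).prod = h then
      Matrix.of (fun α β => ∏ m, (pig g * pidual (f m)) (α m) (β m))
    else 0

/-- The physical subspace 𝒲 = {w : A(g,h) w = δ_{h,e} w for all g,h}. -/
def physSpace (L : ℕ) : Set ((Fin L → Fin 3) → ℂ) :=
  {w | ∀ g h : DihedralGroup 3,
    (Afold L g h).mulVec w = (if h = 1 then (1 : ℂ) else 0) • w}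

/-- Cyclic successor on Fin L. -/
def cyc {L : ℕ} (m : Fin L) : Fin L := ⟨(m.val + 1) % L, Nat.mod_lt _ m.pos⟩

/-- The translation operator 𝒯, determined by
𝒯(v₁⊗v₂⊗⋯⊗v_L) = v_L⊗v₁⊗⋯⊗v_{L−1}. -/
def transOp (L : ℕ) (w : (Fin L → Fin 3) → ℂ) : (Fin L → Fin 3) → ℂ :=
  fun α => w (fun m => α (cyc m))

/- ---------- auxiliary lemmas ---------- -/

lemma pig_inv_mul (g : DihedralGroup 3) : pig g⁻¹ * pig g = 1 := by
  have h1 : ∀ a b : ℕ, Smat ^ a * Smat ^ b = Smat ^ (a + b) := fun a b => (pow_add Smat a b).symm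
  cases g with
  | r i =>
    show Smat ^ (-i).val * Smat ^ i.val = 1
    rw [h1]
    have : (-i).val + i.val = 0 ∨ (-i).val + i.val = 3 := by revert i; decide
    rcases this with h | h <;> rw [h] <;>
      · norm_num [Smat, Matrix.mul_fin_three, pow_succ, Matrix.one_fin_three]
        try first
        | exact Matrix.one_fin_three.symm
        | exact Matrix.one_fin_three
  | sr i =>
    show Tmat * Smat ^ i.val * (Tmat * Smat ^ i.val) = 1
    have : i.val = 0 ∨ i.val = 1 ∨ i.val = 2 := by revert i; decide
    rcases this with h | h | h <;> rw [h] <;>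
      · norm_num [Smat, Tmat, Matrix.mul_fin_three, pow_succ, Matrix.one_fin_three]
        try first
        | exact Matrix.one_fin_three.symm
        | exact Matrix.one_fin_three

lemma pidual_mul_pidual (k u : DihedralGroup 3) :
    pidual k * pidual u = if u = k then pidual k else 0 := by
  cases k with
  | r i => cases u with
    | r j => simp only [pidual, zero_mul]; split <;> rfl
    | sr j => simp [pidual]
  | sr i => cases u with
    | r j => simp [pidual]
    | sr j =>
      simp only [pidual]
      by_cases h : j = i
      · subst h
        rw [Matrix.single_mul_single_same, mul_one, if_pos rfl]
      · rw [Matrix.single_mul_single_of_ne, if_neg (by simpa using h)]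
        intro hc
        apply h
        have h1 : (-i).val = (-j).val := congrArg Fin.val hc
        have h2 : (-i : ZMod 3) = -j := ZMod.val_injective _ h1
        exact (neg_injective h2).symm

lemma conj_ne_one {G : Type*} [Group G] {h : G} (k : G) (hh : h ≠ 1) :
    k * h * k⁻¹ ≠ 1 := by
  intro hc; apply hh
  have h2 : h = k⁻¹ * (k * h * k⁻¹) * k := by group
  rw [h2, hc]; group

lemma Q_mul (g k u : DihedralGroup 3) :
    pig g * pidual k * pig g⁻¹ * (pig g * pidual u)
      = if u = k then pig g * pidual u else 0 := by
  have h1 : pig g * pidual k * pig g⁻¹ * (pig g * pidual u)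
      = pig g * (pidual k * pidual u) := by
    rw [mul_assoc (pig g * pidual k), ← mul_assoc (pig g⁻¹), pig_inv_mul, one_mul, mul_assoc]
  rw [h1, pidual_mul_pidual, mul_ite, mul_zero]
  split
  · next hc => rw [hc]
  · rfl

lemma map_rot (n : ℕ) :
    (List.finRange (n+1)).map (finRotate (n+1)) = (List.finRange n).map Fin.succ ++ [0] := by
  apply List.ext_getElem
  · simp
  · intro i h1 h2
    simp only [List.getElem_map, List.getElem_finRange, finRotate_succ_apply]
    rcases Nat.lt_or_ge i n with hi | hi
    · rw [List.getElem_append_left (by simpa using hi)]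
      simp only [List.getElem_map, List.getElem_finRange]
      ext
      simp [Fin.val_add, Fin.add_def, Nat.mod_eq_of_lt, Nat.succ_lt_succ hi]
    · have hin : i = n := by simp at h1; omega
      subst hin
      rw [List.getElem_append_right (by simp)]
      simp [Fin.ext_iff, Fin.val_add]

lemma prod_comp_rot {G : Type*} [Group G] (n : ℕ) (f : Fin (n+1) → G) :
    ((List.finRange (n+1)).reverse.map (f ∘ finRotate (n+1))).prod
      = f 0 * ((List.finRange (n+1)).reverse.map f).prod * (f 0)⁻¹ := by
  have h1 : ((List.finRange (n+1)).reverse.map (f ∘ finRotate (n+1)))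
      = f 0 :: ((List.finRange n).map Fin.succ).reverse.map f := by
    rw [List.map_reverse, ← List.map_map, map_rot]
    simp [List.map_reverse]
  have h2 : ((List.finRange (n+1)).reverse.map f)
      = ((List.finRange n).map Fin.succ).reverse.map f ++ [f 0] := by
    rw [List.finRange_succ]
    simp
  rw [h1, h2]
  simp [List.prod_append, mul_assoc]

lemma cyc_eq (n : ℕ) (m : Fin (n+1)) : cyc m = finRotate (n+1) m := by
  ext
  rw [finRotate_succ_apply, Fin.add_def]
  show (m.val + 1) % (n+1) = (m.val + (1 : Fin (n+1)).val) % (n+1)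
  conv_lhs => rw [Nat.add_mod, Nat.mod_eq_of_lt m.isLt]
  rfl

lemma afold_mulVec (L : ℕ) (g h : DihedralGroup 3) (v : (Fin L → Fin 3) → ℂ)
    (α : Fin L → Fin 3) :
    (Afold L g h).mulVec v α
      = ∑ f : Fin L → DihedralGroup 3, ∑ β : Fin L → Fin 3,
          if ((List.finRange L).reverse.map f).prod = h then
            (∏ m, (pig g * pidual (f m)) (α m) (β m)) * v β else 0 := by
  simp only [Afold, Matrix.mulVec, dotProduct, Matrix.sum_apply, Finset.sum_mul]
  rw [Finset.sum_comm]
  refine Finset.sum_congr rfl fun f _ => Finset.sum_congr rfl fun β _ => ?_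
  by_cases hP : ((List.finRange L).reverse.map f).prod = h
  · rw [if_pos hP, if_pos hP, Matrix.of_apply]
  · rw [if_neg hP, if_neg hP, Matrix.zero_apply, zero_mul]

lemma key (n : ℕ) (g : DihedralGroup 3) (w : (Fin (n+1) → Fin 3) → ℂ)
    (HW : ∀ (h' : DihedralGroup 3) (γ : Fin (n+1) → Fin 3),
      (∑ f : Fin (n+1) → DihedralGroup 3, ∑ β : Fin (n+1) → Fin 3,
        if ((List.finRange (n+1)).reverse.map f).prod = h' then
          (∏ m, (pig g * pidual (f m)) (γ m) (β m)) * w β else 0)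
      = (if h' = 1 then 1 else 0) * w γ)
    (h : DihedralGroup 3) (hne : h ≠ 1) (α' : Fin (n+1) → Fin 3) :
    (∑ f : Fin (n+1) → DihedralGroup 3, ∑ β : Fin (n+1) → Fin 3,
      if ((List.finRange (n+1)).reverse.map f).prod
          = f ((finRotate (n+1)).symm 0) * h * (f ((finRotate (n+1)).symm 0))⁻¹ then
        (∏ m, (pig g * pidual (f m)) (α' m) (β m)) * w β else 0) = 0 := by
  classical
  set r0 : Fin (n+1) := (finRotate (n+1)).symm 0 with hr0
  have stepA : (∑ f : Fin (n+1) → DihedralGroup 3, ∑ β : Fin (n+1) → Fin 3,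
      if ((List.finRange (n+1)).reverse.map f).prod = f r0 * h * (f r0)⁻¹ then
        (∏ m, (pig g * pidual (f m)) (α' m) (β m)) * w β else 0)
      = ∑ k : DihedralGroup 3, ∑ f : Fin (n+1) → DihedralGroup 3, ∑ β : Fin (n+1) → Fin 3,
          if ((List.finRange (n+1)).reverse.map f).prod = k * h * k⁻¹ then
            (if f r0 = k then ∏ m, (pig g * pidual (f m)) (α' m) (β m) else 0) * w β
          else 0 := by
    have perf : ∀ f : Fin (n+1) → DihedralGroup 3,
        (∑ β : Fin (n+1) → Fin 3,
          if ((List.finRange (n+1)).reverse.map f).prod = f r0 * h * (f r0)⁻¹ then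
            (∏ m, (pig g * pidual (f m)) (α' m) (β m)) * w β else 0)
        = ∑ k : DihedralGroup 3, ∑ β : Fin (n+1) → Fin 3,
            if ((List.finRange (n+1)).reverse.map f).prod = k * h * k⁻¹ then
              (if f r0 = k then ∏ m, (pig g * pidual (f m)) (α' m) (β m) else 0) * w β
            else 0 := by
      intro f
      symm
      calc (∑ k : DihedralGroup 3, ∑ β : Fin (n+1) → Fin 3,
              if ((List.finRange (n+1)).reverse.map f).prod = k * h * k⁻¹ then
                (if f r0 = k then ∏ m, (pig g * pidual (f m)) (α' m) (β m) else 0) * w β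
              else 0)
          = ∑ k : DihedralGroup 3,
              if f r0 = k then (∑ β : Fin (n+1) → Fin 3,
                if ((List.finRange (n+1)).reverse.map f).prod = k * h * k⁻¹ then
                  (∏ m, (pig g * pidual (f m)) (α' m) (β m)) * w β else 0) else 0 := by
            refine Finset.sum_congr rfl fun k _ => ?_
            by_cases hk : f r0 = k
            · subst hk
              rw [if_pos rfl]
              refine Finset.sum_congr rfl fun β _ => ?_
              rw [if_pos rfl]
            · rw [if_neg hk]
              refine Finset.sum_eq_zero fun β _ => ?_
              rw [if_neg hk, zero_mul, ite_self]
        _ = _ := by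
            rw [Finset.sum_ite_eq Finset.univ (f r0)
              (fun k => ∑ β : Fin (n+1) → Fin 3,
                if ((List.finRange (n+1)).reverse.map f).prod = k * h * k⁻¹ then
                  (∏ m, (pig g * pidual (f m)) (α' m) (β m)) * w β else 0),
              if_pos (Finset.mem_univ _)]
    rw [Finset.sum_congr rfl fun f _ => perf f]
    exact Finset.sum_comm
  rw [stepA]
  refine Finset.sum_eq_zero fun k _ => ?_
  have claim2 : ∀ (f : Fin (n+1) → DihedralGroup 3) (β : Fin (n+1) → Fin 3),
      (if f r0 = k then ∏ m, (pig g * pidual (f m)) (α' m) (β m) else 0)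
      = ∑ c : Fin 3, (pig g * pidual k * pig g⁻¹) (α' r0) c *
          ∏ m, (pig g * pidual (f m)) (Function.update α' r0 c m) (β m) := by
    intro f β
    have split1 : ∀ (γ : Fin (n+1) → Fin 3),
        (∏ m, (pig g * pidual (f m)) (γ m) (β m))
        = (pig g * pidual (f r0)) (γ r0) (β r0) *
            ∏ m ∈ Finset.univ.erase r0, (pig g * pidual (f m)) (γ m) (β m) :=
      fun γ => (Finset.mul_prod_erase Finset.univ
        (fun m => (pig g * pidual (f m)) (γ m) (β m)) (Finset.mem_univ r0)).symm
    have split2 : ∀ c : Fin 3,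
        (∏ m, (pig g * pidual (f m)) (Function.update α' r0 c m) (β m))
        = (pig g * pidual (f r0)) c (β r0) *
            ∏ m ∈ Finset.univ.erase r0, (pig g * pidual (f m)) (α' m) (β m) := by
      intro c
      rw [split1 (Function.update α' r0 c), Function.update_self]
      congr 1
      refine Finset.prod_congr rfl fun m hm => ?_
      rw [Function.update_of_ne (Finset.ne_of_mem_erase hm)]
    calc (if f r0 = k then ∏ m, (pig g * pidual (f m)) (α' m) (β m) else 0)
        = (if f r0 = k then pig g * pidual (f r0) else 0) (α' r0) (β r0) *
            ∏ m ∈ Finset.univ.erase r0, (pig g * pidual (f m)) (α' m) (β m) := by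
          split
          · rw [split1 α']
          · rw [Matrix.zero_apply, zero_mul]
      _ = (pig g * pidual k * pig g⁻¹ * (pig g * pidual (f r0))) (α' r0) (β r0) *
            ∏ m ∈ Finset.univ.erase r0, (pig g * pidual (f m)) (α' m) (β m) := by
          rw [Q_mul]
      _ = ∑ c : Fin 3, (pig g * pidual k * pig g⁻¹) (α' r0) c *
          ∏ m, (pig g * pidual (f m)) (Function.update α' r0 c m) (β m) := by
          rw [Matrix.mul_apply, Finset.sum_mul]
          refine Finset.sum_congr rfl fun c _ => ?_
          rw [split2 c, mul_assoc]
  calc (∑ f : Fin (n+1) → DihedralGroup 3, ∑ β : Fin (n+1) → Fin 3,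
          if ((List.finRange (n+1)).reverse.map f).prod = k * h * k⁻¹ then
            (if f r0 = k then ∏ m, (pig g * pidual (f m)) (α' m) (β m) else 0) * w β
          else 0)
      = ∑ c : Fin 3, ∑ f : Fin (n+1) → DihedralGroup 3, ∑ β : Fin (n+1) → Fin 3,
          if ((List.finRange (n+1)).reverse.map f).prod = k * h * k⁻¹ then
            (pig g * pidual k * pig g⁻¹) (α' r0) c *
              ((∏ m, (pig g * pidual (f m)) (Function.update α' r0 c m) (β m)) * w β)
          else 0 := by
        have perfb : ∀ (f : Fin (n+1) → DihedralGroup 3) (β : Fin (n+1) → Fin 3),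
            (if ((List.finRange (n+1)).reverse.map f).prod = k * h * k⁻¹ then
              (if f r0 = k then ∏ m, (pig g * pidual (f m)) (α' m) (β m) else 0) * w β
            else 0)
            = ∑ c : Fin 3,
                if ((List.finRange (n+1)).reverse.map f).prod = k * h * k⁻¹ then
                  (pig g * pidual k * pig g⁻¹) (α' r0) c *
                    ((∏ m, (pig g * pidual (f m)) (Function.update α' r0 c m) (β m)) * w β)
                else 0 := by
          intro f β
          rw [claim2 f β]
          split
          · rw [Finset.sum_mul]
            refine Finset.sum_congr rfl fun c _ => ?_
            rw [mul_assoc]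
          · rw [Finset.sum_const_zero]
        calc (∑ f : Fin (n+1) → DihedralGroup 3, ∑ β : Fin (n+1) → Fin 3,
                if ((List.finRange (n+1)).reverse.map f).prod = k * h * k⁻¹ then
                  (if f r0 = k then ∏ m, (pig g * pidual (f m)) (α' m) (β m) else 0) * w β
                else 0)
            = ∑ f : Fin (n+1) → DihedralGroup 3, ∑ c : Fin 3, ∑ β : Fin (n+1) → Fin 3,
                if ((List.finRange (n+1)).reverse.map f).prod = k * h * k⁻¹ then
                  (pig g * pidual k * pig g⁻¹) (α' r0) c *
                    ((∏ m, (pig g * pidual (f m)) (Function.update α' r0 c m) (β m)) * w β)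
                else 0 := by
              refine Finset.sum_congr rfl fun f _ => ?_
              rw [Finset.sum_congr rfl fun β (_ : β ∈ Finset.univ) => perfb f β]
              exact Finset.sum_comm
          _ = _ := Finset.sum_comm
    _ = ∑ c : Fin 3, (pig g * pidual k * pig g⁻¹) (α' r0) c *
          ∑ f : Fin (n+1) → DihedralGroup 3, ∑ β : Fin (n+1) → Fin 3,
            if ((List.finRange (n+1)).reverse.map f).prod = k * h * k⁻¹ then
              (∏ m, (pig g * pidual (f m)) (Function.update α' r0 c m) (β m)) * w β
            else 0 := by
        refine Finset.sum_congr rfl fun c _ => ?_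
        rw [Finset.mul_sum]
        refine Finset.sum_congr rfl fun f _ => ?_
        rw [Finset.mul_sum]
        refine Finset.sum_congr rfl fun β _ => ?_
        rw [mul_ite, mul_zero]
    _ = 0 := by
        refine Finset.sum_eq_zero fun c _ => ?_
        rw [HW (k * h * k⁻¹) (Function.update α' r0 c),
          if_neg (conj_ne_one k hne), zero_mul, mul_zero]

/-- for L ≥ 2 the translation operator maps 𝒲 into itself. -/
theorem translation_preserves_physical (L : ℕ) (hL : 2 ≤ L)
    (w : (Fin L → Fin 3) → ℂ) (hw : w ∈ physSpace L) :
    transOp L w ∈ physSpace L := by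
  obtain ⟨n, rfl⟩ : ∃ n, L = n + 1 := ⟨L - 1, by omega⟩
  simp only [physSpace, Set.mem_setOf_eq] at hw ⊢
  intro g h
  funext α
  have HW : ∀ (h' : DihedralGroup 3) (γ : Fin (n+1) → Fin 3),
      (∑ f : Fin (n+1) → DihedralGroup 3, ∑ β : Fin (n+1) → Fin 3,
        if ((List.finRange (n+1)).reverse.map f).prod = h' then
          (∏ m, (pig g * pidual (f m)) (γ m) (β m)) * w β else 0)
      = (if h' = 1 then 1 else 0) * w γ := by
    intro h' γ
    have hgf := congrFun (hw g h') γ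
    rw [afold_mulVec] at hgf
    simpa only [Pi.smul_apply, smul_eq_mul] using hgf
  rw [afold_mulVec]
  simp only [transOp, Pi.smul_apply, smul_eq_mul]
  have hcyc : ∀ (β : Fin (n+1) → Fin 3), (fun m => β (cyc m)) = fun m => β (finRotate (n+1) m) := by
    intro β; funext m; rw [cyc_eq]
  simp only [hcyc]
  -- reindex the sums
  have reidx : (∑ f : Fin (n+1) → DihedralGroup 3, ∑ β : Fin (n+1) → Fin 3,
      if ((List.finRange (n+1)).reverse.map f).prod = h then
        (∏ m, (pig g * pidual (f m)) (α m) (β m)) * w (fun m => β (finRotate (n+1) m)) else 0)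
      = ∑ f : Fin (n+1) → DihedralGroup 3, ∑ β : Fin (n+1) → Fin 3,
          if ((List.finRange (n+1)).reverse.map f).prod
              = f ((finRotate (n+1)).symm 0) * h * (f ((finRotate (n+1)).symm 0))⁻¹ then
            (∏ m, (pig g * pidual (f m)) (α (finRotate (n+1) m)) (β m)) * w β else 0 := by
    rw [← Equiv.sum_comp (Equiv.arrowCongr (finRotate (n+1)) (Equiv.refl (DihedralGroup 3)))
      (fun f : Fin (n+1) → DihedralGroup 3 => ∑ β : Fin (n+1) → Fin 3,
        if ((List.finRange (n+1)).reverse.map f).prod = h then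
          (∏ m, (pig g * pidual (f m)) (α m) (β m)) * w (fun m => β (finRotate (n+1) m)) else 0)]
    refine Finset.sum_congr rfl fun f _ => ?_
    rw [← Equiv.sum_comp (Equiv.arrowCongr (finRotate (n+1)) (Equiv.refl (Fin 3)))
      (fun β : Fin (n+1) → Fin 3 =>
        if ((List.finRange (n+1)).reverse.map
            ((Equiv.arrowCongr (finRotate (n+1)) (Equiv.refl (DihedralGroup 3))) f)).prod = h then
          (∏ m, (pig g * pidual
              (((Equiv.arrowCongr (finRotate (n+1)) (Equiv.refl (DihedralGroup 3))) f) m))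
            (α m) (β m)) * w (fun m => β (finRotate (n+1) m)) else 0)]
    refine Finset.sum_congr rfl fun β _ => ?_
    simp only [Equiv.arrowCongr_apply, Equiv.coe_refl, Function.comp, id]
    -- now everything is in terms of f ((finRotate (n+1)).symm m), β ((finRotate (n+1)).symm m)
    have hcond : (((List.finRange (n+1)).reverse.map
          (fun m => f ((finRotate (n+1)).symm m))).prod = h)
        ↔ (((List.finRange (n+1)).reverse.map f).prod
            = f ((finRotate (n+1)).symm 0) * h * (f ((finRotate (n+1)).symm 0))⁻¹) := by
      have h0 : (fun m => f ((finRotate (n+1)).symm m)) ∘ (finRotate (n+1)) = f := by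
        funext m
        exact congrArg f (Equiv.symm_apply_apply _ _)
      have hp := prod_comp_rot n (fun m => f ((finRotate (n+1)).symm m))
      rw [h0] at hp
      constructor
      · intro H; rw [H] at hp; exact hp
      · intro H
        rw [hp] at H
        exact mul_left_cancel (mul_right_cancel H)
    have hprod : (∏ m, (pig g * pidual (f ((finRotate (n+1)).symm m)))
          (α m) (β ((finRotate (n+1)).symm m)))
        = ∏ m, (pig g * pidual (f m)) (α (finRotate (n+1) m)) (β m) := by
      rw [← Equiv.prod_comp (finRotate (n+1)).symm
        (fun j => (pig g * pidual (f j)) (α (finRotate (n+1) j)) (β j))]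
      refine Finset.prod_congr rfl fun m _ => ?_
      rw [Equiv.apply_symm_apply]
    have hwarg : (fun m => β ((finRotate (n+1)).symm (finRotate (n+1) m))) = β := by
      funext m; rw [Equiv.symm_apply_apply]
    rw [hwarg, hprod]
    exact if_congr hcond rfl rfl
  rw [reidx]
  by_cases hone : h = 1
  · subst hone
    have hsimp : ∀ f : Fin (n+1) → DihedralGroup 3,
        f ((finRotate (n+1)).symm 0) * 1 * (f ((finRotate (n+1)).symm 0))⁻¹ = 1 := by
      intro f; group
    calc (∑ f : Fin (n+1) → DihedralGroup 3, ∑ β : Fin (n+1) → Fin 3,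
          if ((List.finRange (n+1)).reverse.map f).prod
              = f ((finRotate (n+1)).symm 0) * 1 * (f ((finRotate (n+1)).symm 0))⁻¹ then
            (∏ m, (pig g * pidual (f m)) (α (finRotate (n+1) m)) (β m)) * w β else 0)
        = ∑ f : Fin (n+1) → DihedralGroup 3, ∑ β : Fin (n+1) → Fin 3,
          if ((List.finRange (n+1)).reverse.map f).prod = 1 then
            (∏ m, (pig g * pidual (f m)) (α (finRotate (n+1) m)) (β m)) * w β else 0 := by
          refine Finset.sum_congr rfl fun f _ => Finset.sum_congr rfl fun β _ => ?_
          rw [hsimp f]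
      _ = (if (1 : DihedralGroup 3) = 1 then 1 else 0) * w (fun m => α (finRotate (n+1) m)) :=
          HW 1 (fun m => α (finRotate (n+1) m))
      _ = _ := by rw [if_pos rfl]
  · rw [if_neg hone, zero_mul]
    exact key n g w HW h hone (fun m => α (finRotate (n+1) m))

end
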